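/- Let G be a finite simple (P_7, C_4, C_5)-free graph, and let H = x_0, x_1, ..., x_6, x_0 (indices in ℤ7) be a 7-hole in G. Then for every vertex x ∈ V(G) \ V(H), exactly one of the following holds: (a) x is adjacent to all of x_0,...,x_6; (b) x is adjacent to none of x_0,...,x_6; (c) there exists i ∈ ℤ7 such that the set of neighbors of x on H is exactly {x_{i−1}, x_i, x_{i+1}}; (d) there exists i ∈ ℤ7 such that the set of neighbors of x on H is exactly {x_{i+2}, x_{i+3}, x_{i−3}, x_{i−2}}. -/

import Mathlib

open SimpleGraph

namespace Paper

variable {V : Type*}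

/-- `X` is complete to `Y` in `G`. -/
def CompleteTo (G : SimpleGraph V) (X Y : Set V) : Prop :=
  ∀ x ∈ X, ∀ y ∈ Y, G.Adj x y

/-- `X` is anticomplete to `Y` in `G`. -/
def AnticompleteTo (G : SimpleGraph V) (X Y : Set V) : Prop :=
  ∀ x ∈ X, ∀ y ∈ Y, ¬ G.Adj x y

/-- Closed neighborhood of `v` inside the induced subgraph of `G` on `S`. -/
def cnbr (G : SimpleGraph V) (S : Set V) (v : V) : Set V :=
  {w | w ∈ S ∧ (w = v ∨ G.Adj v w)}

/-- Neighbors of `v` inside the set `X`. -/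
def nbrIn (G : SimpleGraph V) (X : Set V) (v : V) : Set V :=
  {w | w ∈ X ∧ G.Adj v w}

/-- `G` is a complete graph. -/
def IsCompleteGraph (G : SimpleGraph V) : Prop :=
  ∀ u v : V, u ≠ v → G.Adj u v

/-- The induced subgraph of `G` on `S` admits a clique-cutset: a (possibly empty) clique
`C ⊊ S` such that removing `C` from the induced subgraph on `S` disconnects it. -/
def HasCliqueCutsetOn (G : SimpleGraph V) (S : Set V) : Prop :=
  ∃ C : Set V, C ⊆ S ∧ C ≠ S ∧ G.IsClique C ∧ ¬ (G.induce (S \ C)).Connected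

def HasCliqueCutset (G : SimpleGraph V) : Prop :=
  HasCliqueCutsetOn G Set.univ

/-- The induced subgraph of `G` on `S` contains an induced copy of `H`. -/
def ContainsInducedOn {W : Type*} (G : SimpleGraph V) (S : Set V) (H : SimpleGraph W) : Prop :=
  ∃ f : W ↪ V, (∀ a, f a ∈ S) ∧ ∀ a b, G.Adj (f a) (f b) ↔ H.Adj a b

/-- The induced subgraph of `G` on `S` is `H`-free. -/
def FreeOn {W : Type*} (G : SimpleGraph V) (S : Set V) (H : SimpleGraph W) : Prop :=
  ¬ ContainsInducedOn G S H

/-- `G` is `H`-free. -/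
def Free {W : Type*} (G : SimpleGraph V) (H : SimpleGraph W) : Prop :=
  FreeOn G Set.univ H

/-- The path on `n` vertices. -/
def pathG (n : ℕ) : SimpleGraph (Fin n) :=
  SimpleGraph.fromRel (fun i j => (i : ℕ) + 1 = (j : ℕ))

/-- The cycle on `n` vertices. -/
def cycG (n : ℕ) : SimpleGraph (ZMod n) :=
  SimpleGraph.fromRel (fun i j => i + 1 = j)

/-- The graph `Θ₃ʳ`: `r` internally disjoint three-edge paths meeting at their endpoints.
`Sum.inl 0` and `Sum.inl 1` are the two endpoints, and `Sum.inr (i, 0)`, `Sum.inr (i, 1)`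
are the internal vertices of the `i`-th path. -/
def thetaG (r : ℕ) : SimpleGraph (Fin 2 ⊕ Fin r × Fin 2) :=
  SimpleGraph.fromRel (fun x y =>
    (∃ i : Fin r, x = Sum.inl 0 ∧ y = Sum.inr (i, 0)) ∨
    (∃ i : Fin r, x = Sum.inr (i, 0) ∧ y = Sum.inr (i, 1)) ∨
    (∃ i : Fin r, x = Sum.inr (i, 1) ∧ y = Sum.inl 1))

/-- `B` is the vertex set of an anticomponent of `G`. -/
def IsAnticomponent (G : SimpleGraph V) (B : Set V) : Prop :=
  ∃ c : Gᶜ.ConnectedComponent, B = c.supp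

/-- `G` has exactly one nontrivial anticomponent, and that anticomponent satisfies `P`. -/
def ExactlyOneNontrivialAnticomponent (G : SimpleGraph V) (P : Set V → Prop) : Prop :=
  ∃ B : Set V, IsAnticomponent G B ∧ B.Nontrivial ∧
    (∀ B' : Set V, IsAnticomponent G B' → B'.Nontrivial → B' = B) ∧ P B

/-- The stability number of the induced subgraph of `G` on `S`. -/
noncomputable def alphaOn (G : SimpleGraph V) (S : Set V) : ℕ :=
  sSup {n | ∃ T : Finset V, ↑T ⊆ S ∧ (∀ x ∈ T, ∀ y ∈ T, x ≠ y → ¬ G.Adj x y) ∧ T.card = n}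

/-- The clique number of `G`. -/
noncomputable def cliqueNumber (G : SimpleGraph V) : ℕ :=
  sSup {n | ∃ T : Finset V, G.IsNClique n T}

/-- A 7-hole in `G`, given by an injective map `x : ZMod 7 → V` whose image induces a `C₇`
traversed in the order `x 0, x 1, …, x 6, x 0`. -/
def IsHole7 (G : SimpleGraph V) (x : ZMod 7 → V) : Prop :=
  Function.Injective x ∧ ∀ i j, G.Adj (x i) (x j) ↔ (i - j = 1 ∨ j - i = 1)

/-- The set `A_i^*`: vertices of `A i` anticomplete to `A (i-2) ∪ A (i+2)`. -/
def braceletStar (G : SimpleGraph V) (A : ZMod 7 → Set V) (i : ZMod 7) : Set V :=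
  {v | v ∈ A i ∧ ∀ w ∈ A (i - 2) ∪ A (i + 2), ¬ G.Adj v w}

/-- The set `A_i^+`: vertices of `A i` anticomplete to `A (i-2)` with a neighbor in `A (i+2)`. -/
def braceletPlus (G : SimpleGraph V) (A : ZMod 7 → Set V) (i : ZMod 7) : Set V :=
  {v | v ∈ A i ∧ (∀ w ∈ A (i - 2), ¬ G.Adj v w) ∧ ∃ w ∈ A (i + 2), G.Adj v w}

/-- The set `A_i^-`: vertices of `A i` anticomplete to `A (i+2)` with a neighbor in `A (i-2)`. -/
def braceletMinus (G : SimpleGraph V) (A : ZMod 7 → Set V) (i : ZMod 7) : Set V :=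
  {v | v ∈ A i ∧ (∀ w ∈ A (i + 2), ¬ G.Adj v w) ∧ ∃ w ∈ A (i - 2), G.Adj v w}

/-- The induced subgraph of `G` on `S` is a 7-bracelet with good pair `(A, istar)`. -/
def IsGoodPairOn (G : SimpleGraph V) (S : Set V) (A : ZMod 7 → Set V) (istar : ZMod 7) : Prop :=
  -- `A` is a partition of `S`
  (⋃ i, A i) = S ∧
  (∀ i j : ZMod 7, i ≠ j → Disjoint (A i) (A j)) ∧
  -- (I)
  (∀ i, (A i).Nonempty ∧ G.IsClique (A i) ∧
    CompleteTo G (A i) (A (i - 1) ∪ A (i + 1)) ∧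
    AnticompleteTo G (A i) (A (i - 3) ∪ A (i + 3))) ∧
  -- (II) (a)-(c): `A i` is partitioned into the canonical sets `A_i^*, A_i^+, A_i^-`
  (∀ i, A i = braceletStar G A i ∪ braceletPlus G A i ∪ braceletMinus G A i) ∧
  -- (II) (d),(e): closed neighborhoods (in the induced subgraph on `S`) of vertices of
  -- `A_i^+` (resp. `A_i^-`) form a chain under inclusion
  (∀ i, ∀ u ∈ braceletPlus G A i, ∀ v ∈ braceletPlus G A i,
    cnbr G S u ⊆ cnbr G S v ∨ cnbr G S v ⊆ cnbr G S u) ∧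
  (∀ i, ∀ u ∈ braceletMinus G A i, ∀ v ∈ braceletMinus G A i,
    cnbr G S u ⊆ cnbr G S v ∨ cnbr G S v ⊆ cnbr G S u) ∧
  -- (II) (f)
  (∀ i, ∃ v ∈ A i, (∃ w ∈ A (i - 2), ¬ G.Adj v w) ∧ ∃ w ∈ A (i + 2), ¬ G.Adj v w) ∧
  -- (III)
  braceletPlus G A (istar - 3) = ∅ ∧ braceletMinus G A (istar - 3) = ∅ ∧
  braceletPlus G A (istar + 3) = ∅ ∧ braceletMinus G A (istar + 3) = ∅ ∧
  -- (IV)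
  braceletMinus G A (istar - 2) = ∅ ∧ braceletPlus G A (istar + 2) = ∅ ∧
  -- (V)
  braceletMinus G A (istar - 1) = ∅ ∧ braceletPlus G A (istar + 1) = ∅

def IsGoodPartitionOn (G : SimpleGraph V) (S : Set V) (A : ZMod 7 → Set V) : Prop :=
  ∃ istar, IsGoodPairOn G S A istar

/-- The induced subgraph of `G` on `S` is a 7-bracelet. -/
def IsBracelet7On (G : SimpleGraph V) (S : Set V) : Prop :=
  ∃ A istar, IsGoodPairOn G S A istar

/-- The induced subgraph of `G` on `S` is a quasi-7-bracelet with good partition `A`. -/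
def IsQuasiGoodPartitionOn (G : SimpleGraph V) (S : Set V) (A : ZMod 7 → Set V) : Prop :=
  (⋃ i, A i) = S ∧
  (∀ i j : ZMod 7, i ≠ j → Disjoint (A i) (A j)) ∧
  (∀ i, (A i).Nonempty ∧ G.IsClique (A i) ∧
    CompleteTo G (A i) (A (i - 1) ∪ A (i + 1)) ∧
    AnticompleteTo G (A i) (A (i - 3) ∪ A (i + 3))) ∧
  (∀ i, ∃ v ∈ A i, (∃ w ∈ A (i - 2), ¬ G.Adj v w) ∧ ∃ w ∈ A (i + 2), ¬ G.Adj v w)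

/-- The induced subgraph of `G` on `S` is a thickened emerald with good triple `(A, C, istar)`.
Here `Em, Ep, Ps, Pm, Ms, Mp` play the roles of
`A_{i*}^-, A_{i*}^+, A_{i*+2}^*, A_{i*+2}^-, A_{i*-2}^*, A_{i*-2}^+`. -/
def IsGoodTripleTEOn (G : SimpleGraph V) (S : Set V) (A : ZMod 7 → Set V)
    (C : Set V) (istar : ZMod 7) : Prop :=
  (C ∪ ⋃ i, A i) = S ∧
  (∀ i, Disjoint C (A i)) ∧
  (∀ i j : ZMod 7, i ≠ j → Disjoint (A i) (A j)) ∧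
  C.Nonempty ∧ G.IsClique C ∧
  (∀ i, (A i).Nonempty ∧ G.IsClique (A i)) ∧
  (∀ i, CompleteTo G (A i) (A (i - 1) ∪ A (i + 1)) ∧
        AnticompleteTo G (A i) (A (i - 3) ∪ A (i + 3))) ∧
  (∀ i, (i = istar - 3 ∨ i = istar - 1 ∨ i = istar + 1 ∨ i = istar + 3) →
        AnticompleteTo G (A i) (A (i - 2) ∪ A (i + 2))) ∧
  ∃ Em Ep Ps Pm Ms Mp : Set V,
    Em.Nonempty ∧ Ep.Nonempty ∧ Ps.Nonempty ∧ Pm.Nonempty ∧ Ms.Nonempty ∧ Mp.Nonempty ∧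
    List.Pairwise (fun X Y : Set V => Disjoint X Y) [Em, Ep, Ps, Pm, Ms, Mp] ∧
    G.IsClique Em ∧ G.IsClique Ep ∧ G.IsClique Ps ∧ G.IsClique Pm ∧
    G.IsClique Ms ∧ G.IsClique Mp ∧
    A istar = Em ∪ Ep ∧
    A (istar + 2) = Ps ∪ Pm ∧
    A (istar - 2) = Ms ∪ Mp ∧
    CompleteTo G Em Mp ∧ AnticompleteTo G Em (Ms ∪ A (istar + 2)) ∧
    CompleteTo G Ep Pm ∧ AnticompleteTo G Ep (Ps ∪ A (istar - 2)) ∧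
    CompleteTo G C (Ps ∪ A (istar + 3) ∪ A (istar - 3) ∪ Ms) ∧
    AnticompleteTo G C (Mp ∪ A (istar - 1) ∪ A istar ∪ A (istar + 1) ∪ Pm)

/-- The induced subgraph of `G` on `S` is a thickened emerald. -/
def IsThickenedEmeraldOn (G : SimpleGraph V) (S : Set V) : Prop :=
  ∃ A C istar, IsGoodTripleTEOn G S A C istar

/-- The neighborhoods in `Y` of the vertices of `X` form a chain under inclusion whose
largest element is all of `Y`: this encodes "`X` can be ordered as `x_1, …, x_t` so that
`N[x_t] ∩ Y ⊆ ⋯ ⊆ N[x_1] ∩ Y = Y`". -/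
def ChainedPairTo (G : SimpleGraph V) (X Y : Set V) : Prop :=
  (∀ u ∈ X, ∀ v ∈ X, nbrIn G Y u ⊆ nbrIn G Y v ∨ nbrIn G Y v ⊆ nbrIn G Y u) ∧
  (∃ u ∈ X, ∀ y ∈ Y, G.Adj u y)

/-- The induced subgraph of `G` on `S` is an `r`-lantern with good partition
`(A, Bs 0, …, Bs (r-1), Cs 0, …, Cs (r-1), D)`, where the index `0 : Fin r` plays the role
of the index `1` of the paper. -/
def IsLanternPartitionOn (G : SimpleGraph V) (S : Set V) (r : ℕ)
    (A D : Set V) (Bs Cs : Fin r → Set V) : Prop :=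
  (A ∪ D ∪ (⋃ i, Bs i) ∪ (⋃ i, Cs i)) = S ∧
  Disjoint A D ∧
  (∀ i, Disjoint A (Bs i) ∧ Disjoint A (Cs i) ∧ Disjoint D (Bs i) ∧ Disjoint D (Cs i)) ∧
  (∀ i j, Disjoint (Bs i) (Cs j)) ∧
  (∀ i j, i ≠ j → Disjoint (Bs i) (Bs j) ∧ Disjoint (Cs i) (Cs j)) ∧
  A.Nonempty ∧ D.Nonempty ∧ (∀ i, (Bs i).Nonempty ∧ (Cs i).Nonempty) ∧
  G.IsClique A ∧ G.IsClique D ∧ (∀ i, G.IsClique (Bs i) ∧ G.IsClique (Cs i)) ∧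
  AnticompleteTo G A D ∧
  (∀ i, CompleteTo G A (Bs i) ∧ AnticompleteTo G A (Cs i)) ∧
  (∀ i, CompleteTo G D (Cs i) ∧ AnticompleteTo G D (Bs i)) ∧
  (∀ i : Fin r, i.val = 0 → ChainedPairTo G (Bs i) (Cs i) ∧ ChainedPairTo G (Cs i) (Bs i)) ∧
  (∀ i : Fin r, i.val ≠ 0 → CompleteTo G (Bs i) (Cs i)) ∧
  (∀ i j, i ≠ j → AnticompleteTo G (Bs i ∪ Cs i) (Bs j ∪ Cs j))

/-- The induced subgraph of `G` on `S` is a lantern. -/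
def IsLanternOn (G : SimpleGraph V) (S : Set V) : Prop :=
  ∃ r : ℕ, 3 ≤ r ∧ ∃ (A D : Set V) (Bs Cs : Fin r → Set V),
    IsLanternPartitionOn G S r A D Bs Cs

/-- The induced subgraph of `G` on `S` is a thickened `Θ₃ʳ` with good partition
`(A, Bs, Cs, D)`. -/
def IsThickThetaPartitionOn (G : SimpleGraph V) (S : Set V) (r : ℕ)
    (A D : Set V) (Bs Cs : Fin r → Set V) : Prop :=
  (A ∪ D ∪ (⋃ i, Bs i) ∪ (⋃ i, Cs i)) = S ∧
  Disjoint A D ∧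
  (∀ i, Disjoint A (Bs i) ∧ Disjoint A (Cs i) ∧ Disjoint D (Bs i) ∧ Disjoint D (Cs i)) ∧
  (∀ i j, Disjoint (Bs i) (Cs j)) ∧
  (∀ i j, i ≠ j → Disjoint (Bs i) (Bs j) ∧ Disjoint (Cs i) (Cs j)) ∧
  A.Nonempty ∧ D.Nonempty ∧ (∀ i, (Bs i).Nonempty ∧ (Cs i).Nonempty) ∧
  G.IsClique A ∧ G.IsClique D ∧ (∀ i, G.IsClique (Bs i) ∧ G.IsClique (Cs i)) ∧
  AnticompleteTo G A D ∧
  (∀ i, CompleteTo G A (Bs i) ∧ AnticompleteTo G A (Cs i)) ∧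
  (∀ i, CompleteTo G D (Cs i) ∧ AnticompleteTo G D (Bs i)) ∧
  (∀ i, CompleteTo G (Bs i) (Cs i)) ∧
  (∀ i j, i ≠ j → AnticompleteTo G (Bs i ∪ Cs i) (Bs j ∪ Cs j))

/-- The induced subgraph of `G` on `S` is a `k`-ring with partition `X`. -/
def IsRingPartitionOn (G : SimpleGraph V) (S : Set V) (k : ℕ) (X : ZMod k → Set V) : Prop :=
  (⋃ i, X i) = S ∧
  (∀ i j : ZMod k, i ≠ j → Disjoint (X i) (X j)) ∧
  (∀ i, (X i).Nonempty) ∧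
  (∀ i, ∀ u ∈ X i, X i ⊆ cnbr G S u) ∧
  (∀ i, ∀ u ∈ X i, cnbr G S u ⊆ X (i - 1) ∪ X i ∪ X (i + 1)) ∧
  (∀ i, ∃ u ∈ X i, cnbr G S u = X (i - 1) ∪ X i ∪ X (i + 1)) ∧
  (∀ i, ∀ u ∈ X i, ∀ v ∈ X i, cnbr G S u ⊆ cnbr G S v ∨ cnbr G S v ⊆ cnbr G S u)

/-- The induced subgraph of `G` on `S` is a ring (of some length `k ≥ 4`). -/
def IsRingOn (G : SimpleGraph V) (S : Set V) : Prop :=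
  ∃ k : ℕ, 4 ≤ k ∧ ∃ X : ZMod k → Set V, IsRingPartitionOn G S k X

/-- The induced subgraph of `G` on `S` is a 6-ring. -/
def IsRing6On (G : SimpleGraph V) (S : Set V) : Prop :=
  ∃ X : ZMod 6 → Set V, IsRingPartitionOn G S 6 X

/-- The induced subgraph of `G` on `S` is a 6-wreath. -/
def IsWreath6On (G : SimpleGraph V) (S : Set V) : Prop :=
  ∃ X : ZMod 6 → Set V, IsRingPartitionOn G S 6 X ∧
    CompleteTo G (X 0) (X 1) ∧ CompleteTo G (X 2) (X 3) ∧ CompleteTo G (X 4) (X 5)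

/-- The induced subgraph of `G` on `S` is a 6-crown with good triple `(C, D, istar)`. -/
def IsCrownTripleOn (G : SimpleGraph V) (S : Set V) (C D : ZMod 6 → Set V)
    (istar : ZMod 6) : Prop :=
  ((⋃ i, C i) ∪ (⋃ i, D i)) = S ∧
  (∀ i j : ZMod 6, i ≠ j → Disjoint (C i) (C j) ∧ Disjoint (D i) (D j)) ∧
  (∀ i j : ZMod 6, Disjoint (C i) (D j)) ∧
  (∀ i, G.IsClique (C i) ∧ G.IsClique (D i)) ∧
  (∀ i, (C i).Nonempty) ∧
  D (istar - 2) = ∅ ∧ D (istar - 1) = ∅ ∧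
  (D (istar + 1)).Nonempty ∧ (D (istar + 2)).Nonempty ∧ (D (istar + 3)).Nonempty ∧
  (∀ i, CompleteTo G (C i) (C (i - 1) ∪ C (i + 1)) ∧
        AnticompleteTo G (C i) (C (i + 2) ∪ C (i + 3) ∪ C (i + 4))) ∧
  (∀ i, CompleteTo G (D i) (C (i - 1) ∪ C i ∪ C (i + 1)) ∧
        AnticompleteTo G (D i) (C (i + 2) ∪ C (i + 3) ∪ C (i + 4))) ∧
  (∀ i j : ZMod 6, i ≠ j → AnticompleteTo G (D i) (D j))

/-- The induced subgraph of `G` on `S` is a 6-crown. -/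
def IsCrown6On (G : SimpleGraph V) (S : Set V) : Prop :=
  ∃ C D istar, IsCrownTripleOn G S C D istar

/-- The set `X`: vertices outside `S` mixed on `S`. -/
def setX (G : SimpleGraph V) (S : Set V) : Set V :=
  {v | v ∉ S ∧ (∃ w ∈ S, G.Adj v w) ∧ ∃ w ∈ S, ¬ G.Adj v w}

/-- The set `L_A`: vertices of `X` with a neighbor in `A`, anticomplete to `S \ A`. -/
def setL (G : SimpleGraph V) (S A : Set V) : Set V :=
  {v | v ∈ setX G S ∧ (∃ w ∈ A, G.Adj v w) ∧ ∀ w ∈ S \ A, ¬ G.Adj v w}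

/-- The set `T_{B_i}` (for `A := A`, `Bi := B_i`, `Ci := C_i`): vertices of `X` complete to
`A ∪ B_i`, mixed on `C_i`, anticomplete to `S \ (A ∪ B_i ∪ C_i)`. -/
def setT (G : SimpleGraph V) (S A Bi Ci : Set V) : Set V :=
  {v | v ∈ setX G S ∧ (∀ w ∈ A ∪ Bi, G.Adj v w) ∧
       (∃ w ∈ Ci, G.Adj v w) ∧ (∃ w ∈ Ci, ¬ G.Adj v w) ∧
       ∀ w ∈ S \ (A ∪ Bi ∪ Ci), ¬ G.Adj v w}

/-- The set `R_{B_i}`: vertices of `X` complete to `A`, with a neighbor in `B_i`,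
anticomplete to `S \ (A ∪ B_i)`. -/
def setR (G : SimpleGraph V) (S A Bi : Set V) : Set V :=
  {v | v ∈ setX G S ∧ (∀ w ∈ A, G.Adj v w) ∧ (∃ w ∈ Bi, G.Adj v w) ∧
       ∀ w ∈ S \ (A ∪ Bi), ¬ G.Adj v w}


section Aux
variable {V : Type*}

lemma hole_key (G : SimpleGraph V) (x : ZMod 7 → V) (hx : IsHole7 G x) (i : ZMod 7) :
    ∀ a b : ZMod 7, G.Adj (x (i+a)) (x (i+b)) ↔ (a - b = 1 ∨ b - a = 1) := by
  intro a b; rw [hx.2, add_sub_add_left_eq_sub, add_sub_add_left_eq_sub]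

lemma noC4 (G : SimpleGraph V) (h4 : Free G (cycG 4)) (x : ZMod 7 → V) (hx : IsHole7 G x)
    (v : V) (hv : v ∉ Set.range x) (i : ZMod 7)
    (ha0 : G.Adj v (x i)) (hn1 : ¬ G.Adj v (x (i+1))) (ha2 : G.Adj v (x (i+2))) : False := by
  apply h4
  have key := hole_key G x hx i
  have hxne : ∀ a b : ZMod 7, a ≠ b → x (i+a) ≠ x (i+b) := fun a b h e =>
    h (by have := hx.1 e; exact add_left_cancel this)
  have hn1' : ¬ G.Adj (x (i+1)) v := fun h => hn1 h.symm
  have dv0 : v ≠ x i := fun e => hv ⟨_, e.symm⟩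
  have e01 : G.Adj (x i) (x (i+1)) := by simpa using (key 0 1).2 (by decide)
  have d01 : x i ≠ x (i+1) := by simpa using hxne 0 1 (by decide)
  have n02 : ¬ G.Adj (x i) (x (i+2)) := by
    intro h; have := (key 0 2).1 (by simpa using h); revert this; decide
  have n02' : ¬ G.Adj (x (i+2)) (x i) := fun h => n02 h.symm
  have d02 : x i ≠ x (i+2) := by simpa using hxne 0 2 (by decide)
  have dv1 : v ≠ x (i+1) := fun e => hv ⟨_, e.symm⟩
  have e12 : G.Adj (x (i+1)) (x (i+2)) := by simpa using (key 1 2).2 (by decide)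
  have d12 : x (i+1) ≠ x (i+2) := by simpa using hxne 1 2 (by decide)
  have dv2 : v ≠ x (i+2) := fun e => hv ⟨_, e.symm⟩
  set f : ZMod 4 → V := fun a => if a = 1 then x i else if a = 2 then x (i+1) else if a = 3 then x (i+2) else v with hf
  have henum : ∀ c : ZMod 4, c = 0 ∨ c = 1 ∨ c = 2 ∨ c = 3 := by decide
  refine ⟨⟨f, ?_⟩, fun a => trivial, ?_⟩
  · intro a b hab
    rcases henum a with rfl|rfl|rfl|rfl <;> rcases henum b with rfl|rfl|rfl|rfl <;>
      first
       | rfl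
       | (exfalso; revert hab;
          simp (config := { decide := true }) [hf, dv0, Ne.symm dv0, d01, Ne.symm d01, d02, Ne.symm d02, dv1, Ne.symm dv1, d12, Ne.symm d12, dv2, Ne.symm dv2])
  · intro a b
    rcases henum a with rfl|rfl|rfl|rfl <;> rcases henum b with rfl|rfl|rfl|rfl <;>
      simp (config := { decide := true }) [hf, cycG, SimpleGraph.fromRel_adj,
        SimpleGraph.irrefl, ha0, ha0.symm, hn1, hn1', ha2, ha2.symm, e01, e01.symm, n02, n02', e12, e12.symm]

lemma noC5 (G : SimpleGraph V) (h5 : Free G (cycG 5)) (x : ZMod 7 → V) (hx : IsHole7 G x)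
    (v : V) (hv : v ∉ Set.range x) (i : ZMod 7)
    (ha0 : G.Adj v (x i)) (hn1 : ¬ G.Adj v (x (i+1))) (hn2 : ¬ G.Adj v (x (i+2))) (ha3 : G.Adj v (x (i+3))) : False := by
  apply h5
  have key := hole_key G x hx i
  have hxne : ∀ a b : ZMod 7, a ≠ b → x (i+a) ≠ x (i+b) := fun a b h e =>
    h (by have := hx.1 e; exact add_left_cancel this)
  have hn1' : ¬ G.Adj (x (i+1)) v := fun h => hn1 h.symm
  have hn2' : ¬ G.Adj (x (i+2)) v := fun h => hn2 h.symm
  have dv0 : v ≠ x i := fun e => hv ⟨_, e.symm⟩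
  have e01 : G.Adj (x i) (x (i+1)) := by simpa using (key 0 1).2 (by decide)
  have d01 : x i ≠ x (i+1) := by simpa using hxne 0 1 (by decide)
  have n02 : ¬ G.Adj (x i) (x (i+2)) := by
    intro h; have := (key 0 2).1 (by simpa using h); revert this; decide
  have n02' : ¬ G.Adj (x (i+2)) (x i) := fun h => n02 h.symm
  have d02 : x i ≠ x (i+2) := by simpa using hxne 0 2 (by decide)
  have n03 : ¬ G.Adj (x i) (x (i+3)) := by
    intro h; have := (key 0 3).1 (by simpa using h); revert this; decide
  have n03' : ¬ G.Adj (x (i+3)) (x i) := fun h => n03 h.symm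
  have d03 : x i ≠ x (i+3) := by simpa using hxne 0 3 (by decide)
  have dv1 : v ≠ x (i+1) := fun e => hv ⟨_, e.symm⟩
  have e12 : G.Adj (x (i+1)) (x (i+2)) := by simpa using (key 1 2).2 (by decide)
  have d12 : x (i+1) ≠ x (i+2) := by simpa using hxne 1 2 (by decide)
  have n13 : ¬ G.Adj (x (i+1)) (x (i+3)) := by
    intro h; have := (key 1 3).1 (by simpa using h); revert this; decide
  have n13' : ¬ G.Adj (x (i+3)) (x (i+1)) := fun h => n13 h.symm
  have d13 : x (i+1) ≠ x (i+3) := by simpa using hxne 1 3 (by decide)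
  have dv2 : v ≠ x (i+2) := fun e => hv ⟨_, e.symm⟩
  have e23 : G.Adj (x (i+2)) (x (i+3)) := by simpa using (key 2 3).2 (by decide)
  have d23 : x (i+2) ≠ x (i+3) := by simpa using hxne 2 3 (by decide)
  have dv3 : v ≠ x (i+3) := fun e => hv ⟨_, e.symm⟩
  set f : ZMod 5 → V := fun a => if a = 1 then x i else if a = 2 then x (i+1) else if a = 3 then x (i+2) else if a = 4 then x (i+3) else v with hf
  have henum : ∀ c : ZMod 5, c = 0 ∨ c = 1 ∨ c = 2 ∨ c = 3 ∨ c = 4 := by decide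
  refine ⟨⟨f, ?_⟩, fun a => trivial, ?_⟩
  · intro a b hab
    rcases henum a with rfl|rfl|rfl|rfl|rfl <;> rcases henum b with rfl|rfl|rfl|rfl|rfl <;>
      first
       | rfl
       | (exfalso; revert hab;
          simp (config := { decide := true }) [hf, dv0, Ne.symm dv0, d01, Ne.symm d01, d02, Ne.symm d02, d03, Ne.symm d03, dv1, Ne.symm dv1, d12, Ne.symm d12, d13, Ne.symm d13, dv2, Ne.symm dv2, d23, Ne.symm d23, dv3, Ne.symm dv3])
  · intro a b
    rcases henum a with rfl|rfl|rfl|rfl|rfl <;> rcases henum b with rfl|rfl|rfl|rfl|rfl <;>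
      simp (config := { decide := true }) [hf, cycG, SimpleGraph.fromRel_adj,
        SimpleGraph.irrefl, ha0, ha0.symm, hn1, hn1', hn2, hn2', ha3, ha3.symm, e01, e01.symm, n02, n02', n03, n03', e12, e12.symm, n13, n13', e23, e23.symm]

lemma noP7 (G : SimpleGraph V) (h7 : Free G (pathG 7)) (x : ZMod 7 → V) (hx : IsHole7 G x)
    (v : V) (hv : v ∉ Set.range x) (i : ZMod 7)
    (ha0 : G.Adj v (x i)) (hn1 : ¬ G.Adj v (x (i+1))) (hn2 : ¬ G.Adj v (x (i+2))) (hn3 : ¬ G.Adj v (x (i+3))) (hn4 : ¬ G.Adj v (x (i+4))) (hn5 : ¬ G.Adj v (x (i+5))) : False := by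
  apply h7
  have key := hole_key G x hx i
  have hxne : ∀ a b : ZMod 7, a ≠ b → x (i+a) ≠ x (i+b) := fun a b h e =>
    h (by have := hx.1 e; exact add_left_cancel this)
  have hn1' : ¬ G.Adj (x (i+1)) v := fun h => hn1 h.symm
  have hn2' : ¬ G.Adj (x (i+2)) v := fun h => hn2 h.symm
  have hn3' : ¬ G.Adj (x (i+3)) v := fun h => hn3 h.symm
  have hn4' : ¬ G.Adj (x (i+4)) v := fun h => hn4 h.symm
  have hn5' : ¬ G.Adj (x (i+5)) v := fun h => hn5 h.symm
  have dv0 : v ≠ x i := fun e => hv ⟨_, e.symm⟩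
  have e01 : G.Adj (x i) (x (i+1)) := by simpa using (key 0 1).2 (by decide)
  have d01 : x i ≠ x (i+1) := by simpa using hxne 0 1 (by decide)
  have n02 : ¬ G.Adj (x i) (x (i+2)) := by
    intro h; have := (key 0 2).1 (by simpa using h); revert this; decide
  have n02' : ¬ G.Adj (x (i+2)) (x i) := fun h => n02 h.symm
  have d02 : x i ≠ x (i+2) := by simpa using hxne 0 2 (by decide)
  have n03 : ¬ G.Adj (x i) (x (i+3)) := by
    intro h; have := (key 0 3).1 (by simpa using h); revert this; decide
  have n03' : ¬ G.Adj (x (i+3)) (x i) := fun h => n03 h.symm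
  have d03 : x i ≠ x (i+3) := by simpa using hxne 0 3 (by decide)
  have n04 : ¬ G.Adj (x i) (x (i+4)) := by
    intro h; have := (key 0 4).1 (by simpa using h); revert this; decide
  have n04' : ¬ G.Adj (x (i+4)) (x i) := fun h => n04 h.symm
  have d04 : x i ≠ x (i+4) := by simpa using hxne 0 4 (by decide)
  have n05 : ¬ G.Adj (x i) (x (i+5)) := by
    intro h; have := (key 0 5).1 (by simpa using h); revert this; decide
  have n05' : ¬ G.Adj (x (i+5)) (x i) := fun h => n05 h.symm
  have d05 : x i ≠ x (i+5) := by simpa using hxne 0 5 (by decide)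
  have dv1 : v ≠ x (i+1) := fun e => hv ⟨_, e.symm⟩
  have e12 : G.Adj (x (i+1)) (x (i+2)) := by simpa using (key 1 2).2 (by decide)
  have d12 : x (i+1) ≠ x (i+2) := by simpa using hxne 1 2 (by decide)
  have n13 : ¬ G.Adj (x (i+1)) (x (i+3)) := by
    intro h; have := (key 1 3).1 (by simpa using h); revert this; decide
  have n13' : ¬ G.Adj (x (i+3)) (x (i+1)) := fun h => n13 h.symm
  have d13 : x (i+1) ≠ x (i+3) := by simpa using hxne 1 3 (by decide)
  have n14 : ¬ G.Adj (x (i+1)) (x (i+4)) := by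
    intro h; have := (key 1 4).1 (by simpa using h); revert this; decide
  have n14' : ¬ G.Adj (x (i+4)) (x (i+1)) := fun h => n14 h.symm
  have d14 : x (i+1) ≠ x (i+4) := by simpa using hxne 1 4 (by decide)
  have n15 : ¬ G.Adj (x (i+1)) (x (i+5)) := by
    intro h; have := (key 1 5).1 (by simpa using h); revert this; decide
  have n15' : ¬ G.Adj (x (i+5)) (x (i+1)) := fun h => n15 h.symm
  have d15 : x (i+1) ≠ x (i+5) := by simpa using hxne 1 5 (by decide)
  have dv2 : v ≠ x (i+2) := fun e => hv ⟨_, e.symm⟩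
  have e23 : G.Adj (x (i+2)) (x (i+3)) := by simpa using (key 2 3).2 (by decide)
  have d23 : x (i+2) ≠ x (i+3) := by simpa using hxne 2 3 (by decide)
  have n24 : ¬ G.Adj (x (i+2)) (x (i+4)) := by
    intro h; have := (key 2 4).1 (by simpa using h); revert this; decide
  have n24' : ¬ G.Adj (x (i+4)) (x (i+2)) := fun h => n24 h.symm
  have d24 : x (i+2) ≠ x (i+4) := by simpa using hxne 2 4 (by decide)
  have n25 : ¬ G.Adj (x (i+2)) (x (i+5)) := by
    intro h; have := (key 2 5).1 (by simpa using h); revert this; decide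
  have n25' : ¬ G.Adj (x (i+5)) (x (i+2)) := fun h => n25 h.symm
  have d25 : x (i+2) ≠ x (i+5) := by simpa using hxne 2 5 (by decide)
  have dv3 : v ≠ x (i+3) := fun e => hv ⟨_, e.symm⟩
  have e34 : G.Adj (x (i+3)) (x (i+4)) := by simpa using (key 3 4).2 (by decide)
  have d34 : x (i+3) ≠ x (i+4) := by simpa using hxne 3 4 (by decide)
  have n35 : ¬ G.Adj (x (i+3)) (x (i+5)) := by
    intro h; have := (key 3 5).1 (by simpa using h); revert this; decide
  have n35' : ¬ G.Adj (x (i+5)) (x (i+3)) := fun h => n35 h.symm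
  have d35 : x (i+3) ≠ x (i+5) := by simpa using hxne 3 5 (by decide)
  have dv4 : v ≠ x (i+4) := fun e => hv ⟨_, e.symm⟩
  have e45 : G.Adj (x (i+4)) (x (i+5)) := by simpa using (key 4 5).2 (by decide)
  have d45 : x (i+4) ≠ x (i+5) := by simpa using hxne 4 5 (by decide)
  have dv5 : v ≠ x (i+5) := fun e => hv ⟨_, e.symm⟩
  set f : Fin 7 → V := fun a => if a = 1 then x i else if a = 2 then x (i+1) else if a = 3 then x (i+2) else if a = 4 then x (i+3) else if a = 5 then x (i+4) else if a = 6 then x (i+5) else v with hf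
  have henum : ∀ c : Fin 7, c = 0 ∨ c = 1 ∨ c = 2 ∨ c = 3 ∨ c = 4 ∨ c = 5 ∨ c = 6 := by decide
  refine ⟨⟨f, ?_⟩, fun a => trivial, ?_⟩
  · intro a b hab
    rcases henum a with rfl|rfl|rfl|rfl|rfl|rfl|rfl <;> rcases henum b with rfl|rfl|rfl|rfl|rfl|rfl|rfl <;>
      first
       | rfl
       | (exfalso; revert hab;
          simp (config := { decide := true }) [hf, dv0, Ne.symm dv0, d01, Ne.symm d01, d02, Ne.symm d02, d03, Ne.symm d03, d04, Ne.symm d04, d05, Ne.symm d05, dv1, Ne.symm dv1, d12, Ne.symm d12, d13, Ne.symm d13, d14, Ne.symm d14, d15, Ne.symm d15, dv2, Ne.symm dv2, d23, Ne.symm d23, d24, Ne.symm d24, d25, Ne.symm d25, dv3, Ne.symm dv3, d34, Ne.symm d34, d35, Ne.symm d35, dv4, Ne.symm dv4, d45, Ne.symm d45, dv5, Ne.symm dv5])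
  · intro a b
    rcases henum a with rfl|rfl|rfl|rfl|rfl|rfl|rfl <;> rcases henum b with rfl|rfl|rfl|rfl|rfl|rfl|rfl <;>
      simp (config := { decide := true }) [hf, pathG, SimpleGraph.fromRel_adj,
        SimpleGraph.irrefl, ha0, ha0.symm, hn1, hn1', hn2, hn2', hn3, hn3', hn4, hn4', hn5, hn5', e01, e01.symm, n02, n02', n03, n03', n04, n04', n05, n05', e12, e12.symm, n13, n13', n14, n14', n15, n15', e23, e23.symm, n24, n24', n25, n25', e34, e34.symm, n35, n35', e45, e45.symm]

set_option maxHeartbeats 4000000 in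
set_option maxRecDepth 10000 in
set_option synthInstance.maxHeartbeats 2000000 in
set_option synthInstance.maxSize 2000 in
lemma master (b : ZMod 7 → Bool)
    (H4 : ∀ i, b i = true → b (i+2) = true → b (i+1) = true)
    (H5 : ∀ i, b i = true → b (i+3) = true → (b (i+1) = true ∨ b (i+2) = true))
    (H7 : ∀ i, b i = true → (b (i+1) = true ∨ b (i+2) = true ∨ b (i+3) = true ∨
      b (i+4) = true ∨ b (i+5) = true)) :
    ((∀ i, b i = true) ∨ (∀ i, ¬ b i = true) ∨
     (∃ i, ∀ j, b j = true ↔ (j = i - 1 ∨ j = i ∨ j = i + 1)) ∨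
     (∃ i, ∀ j, b j = true ↔ (j = i + 2 ∨ j = i + 3 ∨ j = i - 3 ∨ j = i - 2))) ∧
    ¬((∀ i, b i = true) ∧ (∀ i, ¬ b i = true)) ∧
    ¬((∀ i, b i = true) ∧ (∃ i, ∀ j, b j = true ↔ (j = i - 1 ∨ j = i ∨ j = i + 1))) ∧
    ¬((∀ i, b i = true) ∧ (∃ i, ∀ j, b j = true ↔ (j = i + 2 ∨ j = i + 3 ∨ j = i - 3 ∨ j = i - 2))) ∧
    ¬((∀ i, ¬ b i = true) ∧ (∃ i, ∀ j, b j = true ↔ (j = i - 1 ∨ j = i ∨ j = i + 1))) ∧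
    ¬((∀ i, ¬ b i = true) ∧ (∃ i, ∀ j, b j = true ↔ (j = i + 2 ∨ j = i + 3 ∨ j = i - 3 ∨ j = i - 2))) ∧
    ¬((∃ i, ∀ j, b j = true ↔ (j = i - 1 ∨ j = i ∨ j = i + 1)) ∧
      (∃ i, ∀ j, b j = true ↔ (j = i + 2 ∨ j = i + 3 ∨ j = i - 3 ∨ j = i - 2))) := by
  revert H4 H5 H7; revert b; decide

end Aux

end Paper

open Paper

theorem statement_9 {V : Type*} [Fintype V] [Nonempty V] (G : SimpleGraph V)
    (h7 : Paper.Free G (pathG 7)) (h4 : Paper.Free G (cycG 4)) (h5 : Paper.Free G (cycG 5))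
    (x : ZMod 7 → V) (hx : IsHole7 G x) (v : V) (hv : v ∉ Set.range x) :
    let ca := ∀ i : ZMod 7, G.Adj v (x i)
    let cb := ∀ i : ZMod 7, ¬ G.Adj v (x i)
    let cc := ∃ i : ZMod 7, ∀ j : ZMod 7,
      G.Adj v (x j) ↔ (j = i - 1 ∨ j = i ∨ j = i + 1)
    let cd := ∃ i : ZMod 7, ∀ j : ZMod 7,
      G.Adj v (x j) ↔ (j = i + 2 ∨ j = i + 3 ∨ j = i - 3 ∨ j = i - 2)
    (ca ∨ cb ∨ cc ∨ cd) ∧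
      ¬(ca ∧ cb) ∧ ¬(ca ∧ cc) ∧ ¬(ca ∧ cd) ∧ ¬(cb ∧ cc) ∧ ¬(cb ∧ cd) ∧ ¬(cc ∧ cd) := by
  intro ca cb cc cd
  classical
  set b : ZMod 7 → Bool := fun i => decide (G.Adj v (x i)) with hbdef
  have hb : ∀ j : ZMod 7, G.Adj v (x j) ↔ b j = true := fun j => by
    simp [hbdef]
  have H4' : ∀ i, b i = true → b (i+2) = true → b (i+1) = true := by
    intro i p q
    by_contra r
    exact noC4 G h4 x hx v hv i ((hb i).2 p) (fun h => r ((hb _).1 h)) ((hb _).2 q)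
  have H5' : ∀ i, b i = true → b (i+3) = true → (b (i+1) = true ∨ b (i+2) = true) := by
    intro i p q
    by_contra r
    push_neg at r
    exact noC5 G h5 x hx v hv i ((hb i).2 p) (fun h => r.1 ((hb _).1 h))
      (fun h => r.2 ((hb _).1 h)) ((hb _).2 q)
  have H7' : ∀ i, b i = true → (b (i+1) = true ∨ b (i+2) = true ∨ b (i+3) = true ∨
      b (i+4) = true ∨ b (i+5) = true) := by
    intro i p
    by_contra r
    push_neg at r
    exact noP7 G h7 x hx v hv i ((hb i).2 p) (fun h => r.1 ((hb _).1 h))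
      (fun h => r.2.1 ((hb _).1 h)) (fun h => r.2.2.1 ((hb _).1 h))
      (fun h => r.2.2.2.1 ((hb _).1 h)) (fun h => r.2.2.2.2 ((hb _).1 h))
  show ((∀ i : ZMod 7, G.Adj v (x i)) ∨ (∀ i : ZMod 7, ¬ G.Adj v (x i)) ∨ (∃ i : ZMod 7, ∀ j : ZMod 7, G.Adj v (x j) ↔ (j = i - 1 ∨ j = i ∨ j = i + 1)) ∨ (∃ i : ZMod 7, ∀ j : ZMod 7, G.Adj v (x j) ↔ (j = i + 2 ∨ j = i + 3 ∨ j = i - 3 ∨ j = i - 2))) ∧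
    ¬((∀ i : ZMod 7, G.Adj v (x i)) ∧ (∀ i : ZMod 7, ¬ G.Adj v (x i))) ∧ ¬((∀ i : ZMod 7, G.Adj v (x i)) ∧ (∃ i : ZMod 7, ∀ j : ZMod 7, G.Adj v (x j) ↔ (j = i - 1 ∨ j = i ∨ j = i + 1))) ∧ ¬((∀ i : ZMod 7, G.Adj v (x i)) ∧ (∃ i : ZMod 7, ∀ j : ZMod 7, G.Adj v (x j) ↔ (j = i + 2 ∨ j = i + 3 ∨ j = i - 3 ∨ j = i - 2))) ∧
    ¬((∀ i : ZMod 7, ¬ G.Adj v (x i)) ∧ (∃ i : ZMod 7, ∀ j : ZMod 7, G.Adj v (x j) ↔ (j = i - 1 ∨ j = i ∨ j = i + 1))) ∧ ¬((∀ i : ZMod 7, ¬ G.Adj v (x i)) ∧ (∃ i : ZMod 7, ∀ j : ZMod 7, G.Adj v (x j) ↔ (j = i + 2 ∨ j = i + 3 ∨ j = i - 3 ∨ j = i - 2))) ∧ ¬((∃ i : ZMod 7, ∀ j : ZMod 7, G.Adj v (x j) ↔ (j = i - 1 ∨ j = i ∨ j = i + 1)) ∧ (∃ i : ZMod 7, ∀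 j : ZMod 7, G.Adj v (x j) ↔ (j = i + 2 ∨ j = i + 3 ∨ j = i - 3 ∨ j = i - 2)))
  simp only [hb]
  exact master b H4' H5' H7'
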